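/- For 1 < J ≤ 3/2 and t > Ψ_c(J) = (1/2)·arcoth(2J−1), the equation a^J(m) = m·coth(2t) has exactly three solutions in (−1,1): 0, m̂(t) and −m̂(t) with m̂(t) > 0; moreover for 0 < t ≤ Ψ_c(J) the only solution is m = 0. -/

import Mathlib

open Real

private lemma aux_tanh {x : ℝ} (hx : 0 < x) : Real.sinh x < x * Real.cosh x := by
  have hd : ∀ y : ℝ, HasDerivAt (fun y : ℝ => y * Real.cosh y - Real.sinh y)
      (y * Real.sinh y) y := by
    intro y
    have h1 : HasDerivAt (fun y : ℝ => y * Real.cosh y)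
        (1 * Real.cosh y + y * Real.sinh y) y :=
      (hasDerivAt_id y).mul (Real.hasDerivAt_cosh y)
    have h2 := h1.sub (Real.hasDerivAt_sinh y)
    refine h2.congr_deriv ?_
    ring
  have hm : StrictMonoOn (fun y : ℝ => y * Real.cosh y - Real.sinh y) (Set.Ici 0) := by
    apply strictMonoOn_of_deriv_pos (convex_Ici 0)
    · exact (Continuous.continuousOn (by continuity))
    · intro y hy
      rw [interior_Ici, Set.mem_Ioi] at hy
      rw [(hd y).deriv]
      exact mul_pos hy (Real.sinh_pos_iff.mpr hy)
  have := hm (Set.self_mem_Ici) (Set.mem_Ici.mpr hx.le) hx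
  simp at this
  linarith

private lemma coth_eq {s : ℝ} (hs : 0 < s) :
    Real.cosh s / Real.sinh s
      = (Real.exp s * Real.exp s + 1) / (Real.exp s * Real.exp s - 1) := by
  have h1 : 1 < Real.exp s := Real.one_lt_exp_iff.mpr hs
  have h2 : (0:ℝ) < Real.exp s * Real.exp s - 1 := by nlinarith
  have h3 : 0 < Real.sinh s := Real.sinh_pos_iff.mpr hs
  rw [div_eq_div_iff h3.ne' h2.ne']
  rw [Real.cosh_eq, Real.sinh_eq, Real.exp_neg]
  have h4 : Real.exp s ≠ 0 := (Real.exp_pos s).ne'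
  field_simp

private lemma hasDeriv_g (J c m : ℝ) :
    HasDerivAt (fun m : ℝ => Real.sinh (2*J*m) - m * Real.cosh (2*J*m) - c*m)
      ((2*J-1) * Real.cosh (2*J*m) - 2*J*m * Real.sinh (2*J*m) - c) m := by
  have h1 : HasDerivAt (fun m : ℝ => 2*J*m) (2*J) m := by
    simpa using (hasDerivAt_id m).const_mul (2*J)
  have hs : HasDerivAt (fun m : ℝ => Real.sinh (2*J*m)) (Real.cosh (2*J*m) * (2*J)) m := h1.sinh
  have hc : HasDerivAt (fun m : ℝ => Real.cosh (2*J*m)) (Real.sinh (2*J*m) * (2*J)) m := h1.cosh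
  have hmc : HasDerivAt (fun m : ℝ => m * Real.cosh (2*J*m))
      (1 * Real.cosh (2*J*m) + m * (Real.sinh (2*J*m) * (2*J))) m :=
    (hasDerivAt_id m).mul hc
  have hcm : HasDerivAt (fun m : ℝ => c*m) c m := by
    simpa using (hasDerivAt_id m).const_mul c
  have := (hs.sub hmc).sub hcm
  refine this.congr_deriv ?_
  ring

private lemma hasDeriv_g1 (J c m : ℝ) :
    HasDerivAt (fun m : ℝ => (2*J-1) * Real.cosh (2*J*m) - 2*J*m * Real.sinh (2*J*m) - c)
      (2*J*((2*J-2) * Real.sinh (2*J*m) - 2*J*m * Real.cosh (2*J*m))) m := by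
  have h1 : HasDerivAt (fun m : ℝ => 2*J*m) (2*J) m := by
    simpa using (hasDerivAt_id m).const_mul (2*J)
  have hs : HasDerivAt (fun m : ℝ => Real.sinh (2*J*m)) (Real.cosh (2*J*m) * (2*J)) m := h1.sinh
  have hc : HasDerivAt (fun m : ℝ => Real.cosh (2*J*m)) (Real.sinh (2*J*m) * (2*J)) m := h1.cosh
  have h2 : HasDerivAt (fun m : ℝ => (2*J-1) * Real.cosh (2*J*m))
      ((2*J-1) * (Real.sinh (2*J*m) * (2*J))) m := hc.const_mul (2*J-1)
  have h3 : HasDerivAt (fun m : ℝ => 2*J*m * Real.sinh (2*J*m))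
      (2*J * Real.sinh (2*J*m) + 2*J*m * (Real.cosh (2*J*m) * (2*J))) m := h1.mul hs
  have := (h2.sub h3).sub_const c
  refine this.congr_deriv ?_
  ring

private lemma g_concave (J c : ℝ) (hJ1 : 1 < J) (hJ2 : J ≤ 3/2) :
    StrictConcaveOn ℝ (Set.Icc (0:ℝ) 1)
      (fun m : ℝ => Real.sinh (2*J*m) - m * Real.cosh (2*J*m) - c*m) := by
  apply strictConcaveOn_of_deriv2_neg (convex_Icc 0 1)
  · exact Continuous.continuousOn (by continuity)
  · intro x hx
    rw [interior_Icc] at hx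
    have hderiv1 : deriv (fun m : ℝ => Real.sinh (2*J*m) - m * Real.cosh (2*J*m) - c*m)
        = fun m : ℝ => (2*J-1) * Real.cosh (2*J*m) - 2*J*m * Real.sinh (2*J*m) - c :=
      funext fun m => (hasDeriv_g J c m).deriv
    have h2 : deriv^[2] (fun m : ℝ => Real.sinh (2*J*m) - m * Real.cosh (2*J*m) - c*m) x
        = 2*J*((2*J-2) * Real.sinh (2*J*x) - 2*J*x * Real.cosh (2*J*x)) := by
      show deriv (deriv _) x = _
      rw [hderiv1]
      exact (hasDeriv_g1 J c x).deriv
    rw [h2]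
    have hy : 0 < 2*J*x := by nlinarith [hx.1]
    have ht := aux_tanh hy
    have hsp : 0 < Real.sinh (2*J*x) := Real.sinh_pos_iff.mpr hy
    have hle : (2*J-2) * Real.sinh (2*J*x) ≤ Real.sinh (2*J*x) := by nlinarith
    have : (2*J-2) * Real.sinh (2*J*x) - 2*J*x * Real.cosh (2*J*x) < 0 := by linarith
    exact mul_neg_of_pos_of_neg (by linarith) this

private lemma no_pos_root (J c : ℝ) (hJ1 : 1 < J) (hJ2 : J ≤ 3/2) (hc : 2*J-1 ≤ c)
    {m : ℝ} (hm : m ∈ Set.Ioo (0:ℝ) 1) :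
    Real.sinh (2*J*m) - m * Real.cosh (2*J*m) - c*m < 0 := by
  have hconc := g_concave J c hJ1 hJ2
  have hsl := hconc.slope_lt_of_hasDerivAt (Set.mem_Icc.mpr ⟨le_refl 0, zero_le_one⟩)
    (Set.mem_Icc.mpr ⟨hm.1.le, hm.2.le⟩) hm.1 (hasDeriv_g J c 0)
  rw [slope_def_field] at hsl
  simp only [mul_zero, Real.sinh_zero, Real.cosh_zero, zero_mul, mul_one, sub_zero,
    zero_sub, sub_neg_eq_add, mul_zero, neg_zero, add_zero] at hsl
  have hneg : (Real.sinh (2*J*m) - m * Real.cosh (2*J*m) - c*m) / m < 0 := by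
    have h1 : (Real.sinh (2*J*m) - m * Real.cosh (2*J*m) - c*m) / m < 2*J - 1 - c := by
      convert hsl using 2
    linarith
  rcases div_neg_iff.mp hneg with ⟨h1, h2⟩ | ⟨h1, h2⟩
  · linarith [hm.1]
  · exact h1

private lemma uniq_pos_root (J c : ℝ) (hJ1 : 1 < J) (hJ2 : J ≤ 3/2)
    {a b : ℝ} (ha : a ∈ Set.Ioo (0:ℝ) 1) (hb : b ∈ Set.Ioo (0:ℝ) 1)
    (hga : Real.sinh (2*J*a) - a * Real.cosh (2*J*a) - c*a = 0)
    (hgb : Real.sinh (2*J*b) - b * Real.cosh (2*J*b) - c*b = 0) : a = b := by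
  set g : ℝ → ℝ := fun m : ℝ => Real.sinh (2*J*m) - m * Real.cosh (2*J*m) - c*m with hgdef
  have hconc := g_concave J c hJ1 hJ2
  have key : ∀ x y : ℝ, x ∈ Set.Ioo (0:ℝ) 1 → y ∈ Set.Ioo (0:ℝ) 1 → g x = 0 → g y = 0 →
      x < y → False := by
    intro x y hx hy hgx hgy hxy
    have hy0 : (0:ℝ) ≠ y := (ne_of_lt (by linarith [hx.1]))
    have hlam : 0 < 1 - x / y := by
      rw [sub_pos, div_lt_one (by linarith [hx.1])]
      exact hxy
    have hmu : 0 < x / y := div_pos hx.1 (by linarith [hx.1])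
    have h5 := hconc.2 (Set.mem_Icc.mpr ⟨le_refl 0, zero_le_one⟩)
      (Set.mem_Icc.mpr ⟨hy.1.le, hy.2.le⟩) hy0 hlam hmu (by ring)
    have h6 : (1 - x/y) * g 0 + (x/y) * g y < g ((1 - x/y) * 0 + (x/y) * y) := by
      simpa [smul_eq_mul, hgdef] using h5
    have hxy' : (1 - x/y) * 0 + (x/y) * y = x := by
      field_simp
      ring
    rw [hxy', hgx, hgy] at h6
    have hg0 : g 0 = 0 := by simp [hgdef]
    rw [hg0] at h6
    simp at h6
  rcases lt_trichotomy a b with h | h | h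
  · exact absurd (key a b ha hb hga hgb h) (fun hf => hf.elim)
  · exact h
  · exact absurd (key b a hb ha hgb hga h) (fun hf => hf.elim)

theorem three_solutions (J : ℝ) (hJ1 : 1 < J) (hJ2 : J ≤ 3/2) :
    (∀ t : ℝ, 0 < t → t ≤ (1/2) * ((1/2) * Real.log ((2*J - 1 + 1)/(2*J - 1 - 1))) →
      ∀ m ∈ Set.Ioo (-1 : ℝ) 1,
        Real.sinh (2*J*m) - m * Real.cosh (2*J*m)
          = m * (Real.cosh (2*t) / Real.sinh (2*t)) → m = 0)
    ∧ (∀ t : ℝ, (1/2) * ((1/2) * Real.log ((2*J - 1 + 1)/(2*J - 1 - 1))) < t →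
        ∃ mh : ℝ, 0 < mh ∧
          {m : ℝ | m ∈ Set.Ioo (-1 : ℝ) 1 ∧
            Real.sinh (2*J*m) - m * Real.cosh (2*J*m)
              = m * (Real.cosh (2*t) / Real.sinh (2*t))}
          = {0, mh, -mh}) := by
  have hJ2' : (0:ℝ) < 2*J - 2 := by linarith
  have hRval : (2*J - 1 + 1)/(2*J - 1 - 1) = 2*J/(2*J-2) := by ring_nf
  have hR1 : 1 < 2*J/(2*J-2) := by
    rw [lt_div_iff₀ hJ2']; linarith
  have hR0 : (0:ℝ) < 2*J/(2*J-2) := by linarith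
  have hlogR : 0 < Real.log (2*J/(2*J-2)) := Real.log_pos hR1
  constructor
  · -- part 1
    intro t ht hle m hm heq
    have hs : (0:ℝ) < 2*t := by linarith
    have hE1 : 1 < Real.exp (2*t) := Real.one_lt_exp_iff.mpr hs
    have hEle : Real.exp (2*t) * Real.exp (2*t) ≤ 2*J/(2*J-2) := by
      rw [← Real.exp_add]
      calc Real.exp (2*t + 2*t) ≤ Real.exp (Real.log (2*J/(2*J-2))) := by
            apply Real.exp_le_exp.mpr
            rw [hRval] at hle
            linarith
        _ = 2*J/(2*J-2) := Real.exp_log hR0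
    have hc : 2*J - 1 ≤ Real.cosh (2*t) / Real.sinh (2*t) := by
      rw [coth_eq hs]
      set E := Real.exp (2*t) * Real.exp (2*t) with hEdef
      have hE1' : (1:ℝ) < E := by nlinarith
      rw [le_div_iff₀ (by linarith)]
      rw [le_div_iff₀ hJ2'] at hEle
      nlinarith
    set c := Real.cosh (2*t) / Real.sinh (2*t) with hcdef
    have hgm : Real.sinh (2*J*m) - m * Real.cosh (2*J*m) - c*m = 0 := by
      rw [heq]; ring
    rcases lt_trichotomy m 0 with hm0 | hm0 | hm0
    · exfalso
      have hmm : -m ∈ Set.Ioo (0:ℝ) 1 := ⟨by linarith, by linarith [hm.1]⟩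
      have hodd : Real.sinh (2*J*(-m)) - (-m) * Real.cosh (2*J*(-m)) - c*(-m) = 0 := by
        rw [show 2*J*(-m) = -(2*J*m) by ring, Real.sinh_neg, Real.cosh_neg]
        linarith [hgm]
      have := no_pos_root J c hJ1 hJ2 hc hmm
      linarith
    · exact hm0
    · exfalso
      have hmm : m ∈ Set.Ioo (0:ℝ) 1 := ⟨hm0, hm.2⟩
      have := no_pos_root J c hJ1 hJ2 hc hmm
      linarith
  · -- part 2
    intro t hgt
    have hP0 : 0 < (1/2) * ((1/2) * Real.log ((2*J - 1 + 1)/(2*J - 1 - 1))) := by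
      rw [hRval]; linarith
    have ht0 : 0 < t := lt_trans hP0 hgt
    have hs : (0:ℝ) < 2*t := by linarith
    have hE1 : 1 < Real.exp (2*t) := Real.one_lt_exp_iff.mpr hs
    have hEgt : 2*J/(2*J-2) < Real.exp (2*t) * Real.exp (2*t) := by
      rw [← Real.exp_add]
      calc 2*J/(2*J-2) = Real.exp (Real.log (2*J/(2*J-2))) := (Real.exp_log hR0).symm
        _ < Real.exp (2*t + 2*t) := by
            apply Real.exp_lt_exp.mpr
            rw [hRval] at hgt
            linarith
    set c := Real.cosh (2*t) / Real.sinh (2*t) with hcdef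
    have hcform : c = (Real.exp (2*t) * Real.exp (2*t) + 1) / (Real.exp (2*t) * Real.exp (2*t) - 1) :=
      coth_eq hs
    set E := Real.exp (2*t) * Real.exp (2*t) with hEdef
    have hE1' : (1:ℝ) < E := by nlinarith
    have hc1 : 1 < c := by
      rw [hcform, lt_div_iff₀ (by linarith)]
      linarith
    have hc2 : c < 2*J - 1 := by
      rw [hcform, div_lt_iff₀ (by linarith)]
      rw [div_lt_iff₀ hJ2'] at hEgt
      nlinarith
    -- the function g
    set g : ℝ → ℝ := fun m : ℝ => Real.sinh (2*J*m) - m * Real.cosh (2*J*m) - c*m with hgdef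
    have hlin : Continuous fun m : ℝ => 2*J*m := continuous_const.mul continuous_id
    have hgcont : Continuous g := by
      rw [hgdef]
      exact ((Real.continuous_sinh.comp hlin).sub
        (continuous_id.mul (Real.continuous_cosh.comp hlin))).sub
        (continuous_const.mul continuous_id)
    have hg0 : g 0 = 0 := by simp [hgdef]
    -- derivative positive near 0
    set φ : ℝ → ℝ := fun x : ℝ => (2*J-1) * Real.cosh (2*J*x) - 2*J*x * Real.sinh (2*J*x) - c
      with hφdef
    have hφcont : Continuous φ := by
      rw [hφdef]
      exact ((continuous_const.mul (Real.continuous_cosh.comp hlin)).sub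
        ((continuous_const.mul continuous_id).mul (Real.continuous_sinh.comp hlin))).sub
        continuous_const
    have hφ0 : 0 < φ 0 := by
      simp [hφdef]
      linarith
    have hnh : φ ⁻¹' Set.Ioi 0 ∈ nhds (0:ℝ) :=
      hφcont.continuousAt.preimage_mem_nhds (Ioi_mem_nhds hφ0)
    rcases Metric.mem_nhds_iff.mp hnh with ⟨δ, hδ0, hball⟩
    set ε : ℝ := min (δ/2) (1/2) with hεdef
    have hε0 : 0 < ε := lt_min (by linarith) (by norm_num)
    have hε1 : ε < 1 := lt_of_le_of_lt (min_le_right _ _) (by norm_num)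
    have hεδ : ∀ x : ℝ, 0 ≤ x → x ≤ ε → 0 < φ x := by
      intro x hx1 hx2
      have : x ∈ Metric.ball (0:ℝ) δ := by
        rw [Metric.mem_ball, Real.dist_eq, sub_zero, abs_of_nonneg hx1]
        have : ε ≤ δ/2 := min_le_left _ _
        linarith
      exact hball this
    have hmono : StrictMonoOn g (Set.Icc 0 ε) := by
      apply strictMonoOn_of_deriv_pos (convex_Icc 0 ε) hgcont.continuousOn
      intro x hx
      rw [interior_Icc] at hx
      have hdg : deriv g x = φ x := by
        rw [hgdef, hφdef]
        exact (hasDeriv_g J c x).deriv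
      rw [hdg]
      exact hεδ x hx.1.le hx.2.le
    have hgε : 0 < g ε := by
      have := hmono (Set.mem_Icc.mpr ⟨le_refl 0, hε0.le⟩) (Set.mem_Icc.mpr ⟨hε0.le, le_refl ε⟩) hε0
      rw [hg0] at this
      exact this
    have hg1 : g 1 < 0 := by
      simp only [hgdef, mul_one]
      have := Real.sinh_sub_cosh (2*J)
      have he : 0 < Real.exp (-(2*J)) := Real.exp_pos _
      linarith
    -- IVT
    have hivt : (0:ℝ) ∈ g '' Set.Ioo ε 1 := by
      apply intermediate_value_Ioo' hε1.le hgcont.continuousOn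
      exact ⟨hg1, hgε⟩
    rcases hivt with ⟨mh, hmhmem, hgmh⟩
    have hmh0 : 0 < mh := lt_trans hε0 hmhmem.1
    have hmh1 : mh < 1 := hmhmem.2
    have hmhIoo : mh ∈ Set.Ioo (0:ℝ) 1 := ⟨hmh0, hmh1⟩
    have hgmh' : Real.sinh (2*J*mh) - mh * Real.cosh (2*J*mh) - c*mh = 0 := hgmh
    refine ⟨mh, hmh0, ?_⟩
    ext x
    simp only [Set.mem_setOf_eq, Set.mem_insert_iff, Set.mem_singleton_iff, Set.mem_Ioo]
    constructor
    · rintro ⟨⟨hx1, hx2⟩, heq⟩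
      have hgx : g x = 0 := by
        simp only [hgdef]
        rw [heq]; ring
      rcases lt_trichotomy x 0 with hx0 | hx0 | hx0
      · right; right
        have hxm : -x ∈ Set.Ioo (0:ℝ) 1 := ⟨by linarith, by linarith⟩
        have hgxm : Real.sinh (2*J*(-x)) - (-x) * Real.cosh (2*J*(-x)) - c*(-x) = 0 := by
          rw [show 2*J*(-x) = -(2*J*x) by ring, Real.sinh_neg, Real.cosh_neg]
          have : Real.sinh (2*J*x) - x * Real.cosh (2*J*x) - c*x = 0 := hgx
          linarith
        have := uniq_pos_root J c hJ1 hJ2 hxm hmhIoo hgxm hgmh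
        linarith
      · left; exact hx0
      · right; left
        exact uniq_pos_root J c hJ1 hJ2 ⟨hx0, hx2⟩ hmhIoo hgx hgmh
    · rintro (rfl | rfl | rfl)
      · refine ⟨⟨by norm_num, by norm_num⟩, ?_⟩
        simp
      · refine ⟨⟨by linarith, hmh1⟩, ?_⟩
        linear_combination hgmh'
      · refine ⟨⟨by linarith, by linarith⟩, ?_⟩
        rw [show 2*J*(-mh) = -(2*J*mh) by ring, Real.sinh_neg, Real.cosh_neg]
        linear_combination -hgmh'
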